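/- Let H, Q_1, …, Q_c be Hermitian operators on ℂ^d, let μ_1, …, μ_c ∈ ℝ, set W := H + Σ_{j=1}^c μ_j Q_j, let β ≥ 0, and let γ := e^{−βW} / Tr(e^{−βW}) be the Non-Abelian Thermal State. Then γ is completely passive with respect to the payoff function W: for every m ≥ 1 and every unitary U on (ℂ^d)^{⊗m}, Tr(U γ^{⊗m} U† W̄_m) ≥ Tr(γ^{⊗m} W̄_m), where W̄_m := Σ_{ℓ=0}^{m−1} I^{⊗ℓ} ⊗ W ⊗ I^{⊗(m−1−ℓ)}. In other words, no chemical work can be extracted from any number of copies of γ by any unitary. -/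

import Mathlib

open Matrix BigOperators
open scoped ComplexOrder

/-- Functional calculus for a Hermitian matrix: apply `f` to the eigenvalues.
(Returns `0` if the matrix is not Hermitian.) -/
noncomputable def matFun {n : Type*} [Fintype n] [DecidableEq n]
    (f : ℝ → ℝ) (A : Matrix n n ℂ) : Matrix n n ℂ :=
  if hA : A.IsHermitian then
    (hA.eigenvectorUnitary : Matrix n n ℂ) *
      Matrix.diagonal (fun i => (f (hA.eigenvalues i) : ℂ)) *
      (star hA.eigenvectorUnitary : Matrix n n ℂ)
  else 0

/-- Spectral projector of a Hermitian matrix onto the direct sum of the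
eigenspaces with eigenvalue in the closed interval `[a, b]`. -/
noncomputable def specProj {n : Type*} [Fintype n] [DecidableEq n]
    (A : Matrix n n ℂ) (a b : ℝ) : Matrix n n ℂ :=
  matFun (Set.indicator (Set.Icc a b) fun _ => (1 : ℝ)) A

/-- Largest eigenvalue of a Hermitian matrix. -/
noncomputable def eigMax {n : Type*} [Fintype n] [DecidableEq n]
    (A : Matrix n n ℂ) : ℝ :=
  if hA : A.IsHermitian then ⨆ i, hA.eigenvalues i else 0

/-- Smallest eigenvalue of a Hermitian matrix. -/
noncomputable def eigMin {n : Type*} [Fintype n] [DecidableEq n]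
    (A : Matrix n n ℂ) : ℝ :=
  if hA : A.IsHermitian then ⨅ i, hA.eigenvalues i else 0

/-- Spectral diameter `Σ(A) = λ_max(A) - λ_min(A)` of a Hermitian matrix. -/
noncomputable def specDiam {n : Type*} [Fintype n] [DecidableEq n]
    (A : Matrix n n ℂ) : ℝ :=
  eigMax A - eigMin A

/-- Operator norm `‖A‖_∞` of a Hermitian matrix: the largest absolute value
of an eigenvalue. -/
noncomputable def opNorm {n : Type*} [Fintype n] [DecidableEq n]
    (A : Matrix n n ℂ) : ℝ :=
  if hA : A.IsHermitian then ⨆ i, |hA.eigenvalues i| else 0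

/-- The single-site operator `I^{⊗ℓ} ⊗ Q ⊗ I^{⊗(N-1-ℓ)}` on `(ℂ^d)^{⊗N}`. -/
noncomputable def siteOp {d : ℕ} (Q : Matrix (Fin d) (Fin d) ℂ) (N : ℕ) (ℓ : Fin N) :
    Matrix (Fin N → Fin d) (Fin N → Fin d) ℂ :=
  Matrix.of fun x y =>
    (∏ k ∈ Finset.univ.erase ℓ, if x k = y k then (1 : ℂ) else 0) * Q (x ℓ) (y ℓ)

/-- The average operator `Q̄ := (1/N) Σ_ℓ I^{⊗ℓ} ⊗ Q ⊗ I^{⊗(N-1-ℓ)}` on `(ℂ^d)^{⊗N}`. -/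
noncomputable def avgOp {d : ℕ} (Q : Matrix (Fin d) (Fin d) ℂ) (N : ℕ) :
    Matrix (Fin N → Fin d) (Fin N → Fin d) ℂ :=
  (N : ℂ)⁻¹ • ∑ ℓ : Fin N, siteOp Q N ℓ

/-- The `N`-fold tensor power `ρ^{⊗N}` on `(ℂ^d)^{⊗N}`. -/
noncomputable def tensorPow {d : ℕ} (ρ : Matrix (Fin d) (Fin d) ℂ) (N : ℕ) :
    Matrix (Fin N → Fin d) (Fin N → Fin d) ℂ :=
  Matrix.of fun x y => ∏ ℓ, ρ (x ℓ) (y ℓ)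

/-- The reduced state on the `ℓ`-th tensor factor: partial trace over all
tensor factors except the `ℓ`-th. -/
noncomputable def reduceAt {d N : ℕ}
    (Ω : Matrix (Fin N → Fin d) (Fin N → Fin d) ℂ) (ℓ : Fin N) :
    Matrix (Fin d) (Fin d) ℂ :=
  Matrix.of fun a b =>
    ∑ x ∈ Finset.univ.filter (fun x : Fin N → Fin d => x ℓ = a),
      Ω x (Function.update x ℓ b)

/-- Quantum relative entropy `D(ρ‖σ) = Tr(ρ (log ρ - log σ))`, with the
convention `log 0 = 0` (so `0 log 0 = 0` on the kernel of `ρ`). -/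
noncomputable def relEnt {n : Type*} [Fintype n] [DecidableEq n]
    (ρ σ : Matrix n n ℂ) : ℝ :=
  (Matrix.trace (ρ * (matFun Real.log ρ - matFun Real.log σ))).re

/-- Trace norm `‖A‖₁ = Tr √(AᴴA)`. -/
noncomputable def traceNorm {n : Type*} [Fintype n] [DecidableEq n]
    (A : Matrix n n ℂ) : ℝ :=
  (Matrix.trace
    ((Matrix.posSemidef_conjTranspose_mul_self A).1.eigenvectorUnitary.1 *
      Matrix.diagonal (((↑) : ℝ → ℂ) ∘ (Real.sqrt ·) ∘
        (Matrix.posSemidef_conjTranspose_mul_self A).1.eigenvalues) *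
      (star (Matrix.posSemidef_conjTranspose_mul_self A).1.eigenvectorUnitary :
        Matrix n n ℂ))).re

/-- Matrix exponential, defined by the power series. -/
noncomputable def matExp {n : Type*} [Fintype n] [DecidableEq n]
    (A : Matrix n n ℂ) : Matrix n n ℂ :=
  ∑' k : ℕ, ((k.factorial : ℂ)⁻¹) • A ^ k


section NATSaux

lemma tensorPow_mul {d : ℕ} (A B : Matrix (Fin d) (Fin d) ℂ) (N : ℕ) :
    tensorPow (A * B) N = tensorPow A N * tensorPow B N := by
  ext x y
  simp only [tensorPow, Matrix.mul_apply, Matrix.of_apply]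
  rw [Finset.prod_univ_sum]
  simp [Fintype.piFinset_univ, Finset.prod_mul_distrib]

lemma tensorPow_diagonal {d : ℕ} (c : Fin d → ℂ) (N : ℕ) :
    tensorPow (Matrix.diagonal c) N
      = Matrix.diagonal (fun x : Fin N → Fin d => ∏ ℓ, c (x ℓ)) := by
  ext x y
  by_cases h : x = y
  · subst h; simp [tensorPow, Matrix.diagonal_apply_eq]
  · rw [Matrix.diagonal_apply_ne _ h]
    obtain ⟨ℓ, hℓ⟩ := Function.ne_iff.mp h
    simp only [tensorPow, Matrix.of_apply]
    exact Finset.prod_eq_zero (Finset.mem_univ ℓ) (by rw [Matrix.diagonal_apply_ne _ hℓ])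

lemma tensorPow_conjTranspose {d : ℕ} (A : Matrix (Fin d) (Fin d) ℂ) (N : ℕ) :
    tensorPow Aᴴ N = (tensorPow A N)ᴴ := by
  ext x y
  simp [tensorPow, Matrix.conjTranspose_apply]

lemma tensorPow_one {d N : ℕ} : tensorPow (1 : Matrix (Fin d) (Fin d) ℂ) N = 1 := by
  ext x y
  by_cases h : x = y
  · subst h; simp [tensorPow, Matrix.one_apply_eq]
  · rw [Matrix.one_apply_ne h]
    obtain ⟨ℓ, hℓ⟩ := Function.ne_iff.mp h
    simp only [tensorPow, Matrix.of_apply]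
    exact Finset.prod_eq_zero (Finset.mem_univ ℓ) (Matrix.one_apply_ne hℓ)

lemma siteOp_conj {d : ℕ} (V : Matrix (Fin d) (Fin d) ℂ) (hV : V * Vᴴ = 1)
    (c : Fin d → ℂ) (N : ℕ) (ℓ : Fin N) :
    siteOp (V * Matrix.diagonal c * Vᴴ) N ℓ =
      tensorPow V N * Matrix.diagonal (fun z : Fin N → Fin d => c (z ℓ)) * (tensorPow V N)ᴴ := by
  ext x y
  have hentry : ∀ a b, (V * Matrix.diagonal c * Vᴴ) a b = ∑ t, V a t * star (V b t) * c t := by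
    intro a b
    simp only [Matrix.mul_apply, Matrix.conjTranspose_apply, Matrix.diagonal_apply, mul_ite,
      mul_zero, ite_mul, zero_mul, Finset.sum_ite_eq', Finset.mem_univ, if_true, Finset.sum_mul]
    exact Finset.sum_congr rfl (fun t _ => by ring)
  have key : (tensorPow V N * Matrix.diagonal (fun z : Fin N → Fin d => c (z ℓ))
        * (tensorPow V N)ᴴ) x y
      = ∏ k, ∑ t, V (x k) t * star (V (y k) t) * (if k = ℓ then c t else 1) := by
    rw [Finset.prod_univ_sum]
    simp only [Fintype.piFinset_univ]
    simp only [Matrix.mul_apply, Matrix.conjTranspose_apply, tensorPow, Matrix.of_apply,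
      Matrix.diagonal_apply, mul_ite, mul_zero, ite_mul, zero_mul, Finset.sum_ite_eq',
      Finset.mem_univ, if_true, Finset.sum_mul]
    refine Finset.sum_congr rfl (fun z _ => ?_)
    have hprod : ∏ k, (if k = ℓ then c (z k) else 1) = c (z ℓ) := by
      simp
    have hsplit : ∀ k : Fin N,
        (if k = ℓ then V (x k) (z k) * star (V (y k) (z k)) * c (z k)
          else V (x k) (z k) * star (V (y k) (z k)) * 1)
        = (V (x k) (z k) * star (V (y k) (z k))) * (if k = ℓ then c (z k) else 1) := by
      intro k; split <;> ring
    rw [Finset.prod_congr rfl fun k _ => hsplit k, Finset.prod_mul_distrib,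
      Finset.prod_mul_distrib, hprod, star_prod]
    ring
  rw [key, ← Finset.mul_prod_erase Finset.univ _ (Finset.mem_univ ℓ)]
  have h1 : (∑ t, V (x ℓ) t * star (V (y ℓ) t) * (if ℓ = ℓ then c t else 1))
      = (V * Matrix.diagonal c * Vᴴ) (x ℓ) (y ℓ) := by
    rw [hentry]
    simp
  have h2 : ∀ k ∈ Finset.univ.erase ℓ,
      (∑ t, V (x k) t * star (V (y k) t) * (if k = ℓ then c t else 1))
        = if x k = y k then (1:ℂ) else 0 := by
    intro k hk
    have hkℓ : k ≠ ℓ := Finset.ne_of_mem_erase hk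
    have : (∑ t, V (x k) t * star (V (y k) t) * (if k = ℓ then c t else 1))
        = (V * Vᴴ) (x k) (y k) := by
      simp only [if_neg hkℓ, mul_one, Matrix.mul_apply, Matrix.conjTranspose_apply]
    rw [this, hV, Matrix.one_apply]
  rw [h1, Finset.prod_congr rfl h2]
  simp only [siteOp, Matrix.of_apply]
  ring

lemma trace_form {n : Type*} [Fintype n] [DecidableEq n] (B : Matrix n n ℂ) (f g : n → ℝ) :
    Matrix.trace (B * Matrix.diagonal (fun x => (f x : ℂ)) * Bᴴ *
        Matrix.diagonal (fun y => (g y : ℂ)))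
      = ((∑ y, ∑ x, Complex.normSq (B y x) * f x * g y : ℝ) : ℂ) := by
  have h1 : ∀ y : n, (B * Matrix.diagonal (fun x => (f x : ℂ)) * Bᴴ) y y
      = ∑ x, (Complex.normSq (B y x) * f x : ℝ) := by
    intro y
    push_cast
    simp only [Matrix.mul_apply, Matrix.conjTranspose_apply, Matrix.diagonal_apply, mul_ite,
      mul_zero, ite_mul, zero_mul, Finset.sum_ite_eq', Finset.mem_univ, if_true, Finset.sum_mul]
    refine Finset.sum_congr rfl fun t _ => ?_
    rw [← Complex.mul_conj]
    ring_nf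
    rw [Complex.star_def]
  rw [Matrix.trace]
  push_cast
  refine Finset.sum_congr rfl fun y _ => ?_
  rw [Matrix.diag_apply, Matrix.mul_diagonal, h1]
  push_cast
  rw [Finset.sum_mul]

lemma row_sums {n : Type*} [Fintype n] [DecidableEq n] {B : Matrix n n ℂ}
    (hB : B * Bᴴ = 1) (y : n) : ∑ x, Complex.normSq (B y x) = 1 := by
  have := congrArg (fun M : Matrix n n ℂ => M y y) hB
  simp only [Matrix.mul_apply, Matrix.conjTranspose_apply, Matrix.one_apply_eq] at this
  have h2 : ((∑ x, Complex.normSq (B y x) : ℝ) : ℂ) = 1 := by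
    rw [← this]
    push_cast
    refine Finset.sum_congr rfl fun t _ => ?_
    rw [← Complex.mul_conj, Complex.star_def]
  exact_mod_cast h2

lemma col_sums {n : Type*} [Fintype n] [DecidableEq n] {B : Matrix n n ℂ}
    (hB : Bᴴ * B = 1) (x : n) : ∑ y, Complex.normSq (B y x) = 1 := by
  have := congrArg (fun M : Matrix n n ℂ => M x x) hB
  simp only [Matrix.mul_apply, Matrix.conjTranspose_apply, Matrix.one_apply_eq] at this
  have h2 : ((∑ y, Complex.normSq (B y x) : ℝ) : ℂ) = 1 := by
    rw [← this]
    push_cast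
    refine Finset.sum_congr rfl fun t _ => ?_
    rw [← Complex.mul_conj, Complex.star_def]
    ring
  exact_mod_cast h2

lemma rearrange_ineq {ι : Type*} [Fintype ι] (β : ℝ) (hβ : 0 ≤ β) (a : ι → ℝ)
    (D : ι → ι → ℝ) (hD : ∀ y x, 0 ≤ D y x)
    (hrow : ∀ y, ∑ x, D y x = 1) (hcol : ∀ x, ∑ y, D y x = 1) :
    ∑ x, Real.exp (-β * a x) * a x ≤ ∑ y, ∑ x, D y x * Real.exp (-β * a x) * a y := by
  rcases eq_or_lt_of_le hβ with h0 | hpos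
  · subst h0
    simp only [zero_mul, neg_zero, Real.exp_zero, one_mul, mul_one]
    refine le_of_eq ?_
    have h : ∀ y : ι, ∑ x, D y x * a y = a y := by
      intro y; rw [← Finset.sum_mul, hrow, one_mul]
    simp [h]
  · have key : ∀ y x, D y x * (Real.exp (-β * a x) - Real.exp (-β * a y))
        ≤ D y x * (Real.exp (-β * a x) * (β * (a y - a x))) := by
      intro y x
      refine mul_le_mul_of_nonneg_left ?_ (hD y x)
      have hexp : Real.exp (-β * a y) = Real.exp (-β * a x) * Real.exp (-(β * (a y - a x))) := by
        rw [← Real.exp_add]; ring_nf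
      rw [hexp]
      have h1 : 1 - Real.exp (-(β * (a y - a x))) ≤ β * (a y - a x) := by
        have := Real.add_one_le_exp (-(β * (a y - a x)))
        linarith
      nlinarith [Real.exp_pos (-β * a x)]
    have e1 : ∑ y, ∑ x, D y x * Real.exp (-β * a x) = ∑ x, Real.exp (-β * a x) := by
      rw [Finset.sum_comm]
      refine Finset.sum_congr rfl fun x _ => ?_
      rw [← Finset.sum_mul, hcol, one_mul]
    have e2 : ∑ y, ∑ x, D y x * Real.exp (-β * a y) = ∑ y, Real.exp (-β * a y) := by
      refine Finset.sum_congr rfl fun y _ => ?_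
      rw [← Finset.sum_mul, hrow, one_mul]
    have hzero : ∑ y, ∑ x, D y x * (Real.exp (-β * a x) - Real.exp (-β * a y)) = 0 := by
      simp only [mul_sub, Finset.sum_sub_distrib]
      rw [e1, e2, sub_self]
    have hsum : (0:ℝ) ≤ ∑ y, ∑ x, D y x * (Real.exp (-β * a x) * (β * (a y - a x))) := by
      rw [← hzero]
      exact Finset.sum_le_sum fun y _ => Finset.sum_le_sum fun x _ => key y x
    have eL : ∑ y, ∑ x, D y x * Real.exp (-β * a x) * a x
        = ∑ x, Real.exp (-β * a x) * a x := by
      rw [Finset.sum_comm]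
      refine Finset.sum_congr rfl fun x _ => ?_
      simp only [mul_assoc]
      rw [← Finset.sum_mul, hcol, one_mul]
    have expand : ∀ y x, D y x * (Real.exp (-β * a x) * (β * (a y - a x)))
        = β * (D y x * Real.exp (-β * a x) * a y) - β * (D y x * Real.exp (-β * a x) * a x) := by
      intro y x; ring
    simp only [expand, Finset.sum_sub_distrib, ← Finset.mul_sum] at hsum
    rw [eL] at hsum
    have hmul : β * (∑ x, Real.exp (-β * a x) * a x)
        ≤ β * ∑ y, ∑ x, D y x * Real.exp (-β * a x) * a y := by linarith
    exact le_of_mul_le_mul_left hmul hpos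

lemma matExp_eq_exp {n : Type*} [Fintype n] [DecidableEq n] (A : Matrix n n ℂ) :
    matExp A = NormedSpace.exp A := by rw [NormedSpace.exp_eq_tsum ℂ]; rfl

lemma gamma_diag {d : ℕ} (W : Matrix (Fin d) (Fin d) ℂ) (hWh : W.IsHermitian) (β : ℝ) :
    ∃ (V : Matrix (Fin d) (Fin d) ℂ) (w : Fin d → ℝ),
      V * Vᴴ = 1 ∧ Vᴴ * V = 1 ∧
      W = V * Matrix.diagonal (fun i => (w i : ℂ)) * Vᴴ ∧
      matExp (-(β : ℂ) • W) = V * Matrix.diagonal (fun i => (Real.exp (-β * w i) : ℂ)) * Vᴴ := by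
  refine ⟨(hWh.eigenvectorUnitary : Matrix (Fin d) (Fin d) ℂ), hWh.eigenvalues, ?_, ?_, ?_, ?_⟩
  · have := (hWh.eigenvectorUnitary).prop
    rw [Unitary.mem_iff] at this
    rw [← Matrix.star_eq_conjTranspose]
    exact this.2
  · have := (hWh.eigenvectorUnitary).prop
    rw [Unitary.mem_iff] at this
    rw [← Matrix.star_eq_conjTranspose]
    exact this.1
  · rw [← Matrix.star_eq_conjTranspose]
    exact hWh.spectral_theorem
  · set V : Matrix (Fin d) (Fin d) ℂ := (hWh.eigenvectorUnitary : Matrix (Fin d) (Fin d) ℂ)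
    have hV1 : V * Vᴴ = 1 := by
      have := (hWh.eigenvectorUnitary).prop
      rw [Unitary.mem_iff] at this
      rw [← Matrix.star_eq_conjTranspose]
      exact this.2
    have hV2 : Vᴴ * V = 1 := by
      have := (hWh.eigenvectorUnitary).prop
      rw [Unitary.mem_iff] at this
      rw [← Matrix.star_eq_conjTranspose]
      exact this.1
    have hVinv : V⁻¹ = Vᴴ := Matrix.inv_eq_right_inv hV1
    have hUnit : IsUnit V := ⟨⟨V, Vᴴ, hV1, hV2⟩, rfl⟩
    have hdiag : Matrix.diagonal (fun i => ((-β * hWh.eigenvalues i : ℝ) : ℂ))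
        = (-(β : ℂ)) • Matrix.diagonal (RCLike.ofReal ∘ hWh.eigenvalues) := by
      have hfun : (fun i => ((-β * hWh.eigenvalues i : ℝ) : ℂ))
          = (-(β : ℂ)) • (RCLike.ofReal ∘ hWh.eigenvalues) := by
        funext i
        simp [Function.comp]
      rw [hfun, Matrix.diagonal_smul]
    have hsmul : -(β : ℂ) • W
        = V * Matrix.diagonal (fun i => ((-β * hWh.eigenvalues i : ℝ) : ℂ)) * star V := by
      conv_lhs => rw [hWh.spectral_theorem, Unitary.conjStarAlgAut_apply]
      rw [hdiag, Matrix.mul_smul, Matrix.smul_mul]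
    have hexpfun : (fun i => NormedSpace.exp (((-β * hWh.eigenvalues i : ℝ) : ℂ)))
        = fun i => (Real.exp (-β * hWh.eigenvalues i) : ℂ) :=
      funext fun i => by rw [← Complex.exp_eq_exp_ℂ, ← Complex.ofReal_exp]
    rw [matExp_eq_exp, hsmul, Matrix.star_eq_conjTranspose, ← hVinv,
      Matrix.exp_conj _ _ hUnit, Matrix.exp_diagonal, Pi.exp_def, hexpfun, hVinv]

end NATSaux

/-- The Non-Abelian Thermal State is completely passive with
respect to the payoff function `W = H + Σ_j μ_j Q_j`: no unitary on any number
of copies can lower the expectation value of `W̄_m`. -/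
theorem NATS_completely_passive
    {d : ℕ} (c : ℕ)
    (H : Matrix (Fin d) (Fin d) ℂ) (hH : H.IsHermitian)
    (Q : Fin c → Matrix (Fin d) (Fin d) ℂ) (hQ : ∀ j, (Q j).IsHermitian)
    (μ : Fin c → ℝ) (β : ℝ) (hβ : 0 ≤ β)
    (W : Matrix (Fin d) (Fin d) ℂ)
    (hW : W = H + ∑ j, (μ j : ℂ) • Q j)
    (γ : Matrix (Fin d) (Fin d) ℂ)
    (hγ : γ = (Matrix.trace (matExp (-(β : ℂ) • W)))⁻¹ • matExp (-(β : ℂ) • W)) :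
    ∀ m : ℕ, 1 ≤ m →
      ∀ U : Matrix (Fin m → Fin d) (Fin m → Fin d) ℂ,
        U ∈ Matrix.unitaryGroup (Fin m → Fin d) ℂ →
        (Matrix.trace (tensorPow γ m * ∑ ℓ : Fin m, siteOp W m ℓ)).re ≤
          (Matrix.trace (U * tensorPow γ m * Uᴴ * ∑ ℓ : Fin m, siteOp W m ℓ)).re := by
  intro m hm U hU
  rcases Nat.eq_zero_or_pos d with hd | hd
  · subst hd
    haveI : IsEmpty (Fin m → Fin 0) := ⟨fun f => (f ⟨0, hm⟩).elim0⟩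
    have hz : ∀ A : Matrix (Fin m → Fin 0) (Fin m → Fin 0) ℂ, Matrix.trace A = 0 := by
      intro A
      rw [Matrix.trace, Finset.univ_eq_empty, Finset.sum_empty]
    rw [hz, hz]
  · -- Hermiticity of W
    have hWh : W.IsHermitian := by
      rw [hW]
      refine hH.add ?_
      have : ∀ j : Fin c, ((μ j : ℂ) • Q j).IsHermitian := by
        intro j
        unfold Matrix.IsHermitian
        rw [Matrix.conjTranspose_smul, (hQ j).eq, Complex.star_def, Complex.conj_ofReal]
      unfold Matrix.IsHermitian
      rw [Matrix.conjTranspose_sum]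
      exact Finset.sum_congr rfl fun j _ => this j
    obtain ⟨V, w, hV1, hV2, hspec, hexp⟩ := gamma_diag W hWh β
    set Z : ℝ := ∑ i, Real.exp (-β * w i) with hZdef
    haveI : Nonempty (Fin d) := ⟨⟨0, hd⟩⟩
    have hZ : 0 < Z := Finset.sum_pos (fun i _ => Real.exp_pos _) Finset.univ_nonempty
    -- trace of matExp
    have htr : Matrix.trace (matExp (-(β : ℂ) • W)) = (Z : ℂ) := by
      rw [hexp, Matrix.trace_mul_cycle, hV2, Matrix.one_mul, Matrix.trace_diagonal, hZdef]
      push_cast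
      rfl
    -- γ in diagonal form
    set p : Fin d → ℝ := fun i => Real.exp (-β * w i) / Z with hpdef
    have hγd : γ = V * Matrix.diagonal (fun i => (p i : ℂ)) * Vᴴ := by
      have hfun : (fun i => (p i : ℂ))
          = ((Z : ℂ)⁻¹) • (fun i => (Real.exp (-β * w i) : ℂ)) := by
        funext i
        simp [hpdef, div_eq_inv_mul]
      rw [hγ, htr, hexp, ← Matrix.smul_mul, ← Matrix.mul_smul, ← Matrix.diagonal_smul, ← hfun]
    -- tensor structures
    set Vm : Matrix (Fin m → Fin d) (Fin m → Fin d) ℂ := tensorPow V m with hVmdef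
    have hVm1 : Vm * Vmᴴ = 1 := by
      rw [hVmdef, ← tensorPow_conjTranspose, ← tensorPow_mul, hV1, tensorPow_one]
    have hVm2 : Vmᴴ * Vm = 1 := by
      rw [hVmdef, ← tensorPow_conjTranspose, ← tensorPow_mul, hV2, tensorPow_one]
    set P : (Fin m → Fin d) → ℝ := fun x => ∏ ℓ, p (x ℓ) with hPdef
    set a : (Fin m → Fin d) → ℝ := fun x => ∑ ℓ, w (x ℓ) with hadef
    have hΓ : tensorPow γ m = Vm * Matrix.diagonal (fun x => (P x : ℂ)) * Vmᴴ := by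
      rw [hγd, tensorPow_mul, tensorPow_mul, tensorPow_diagonal, tensorPow_conjTranspose,
        hVmdef]
      have : (fun x : Fin m → Fin d => ∏ ℓ, ((p (x ℓ) : ℂ))) = fun x => ((P x : ℝ) : ℂ) := by
        funext x
        rw [hPdef]
        push_cast
        rfl
      rw [this]
    have hS : (∑ ℓ : Fin m, siteOp W m ℓ)
        = Vm * Matrix.diagonal (fun x => (a x : ℂ)) * Vmᴴ := by
      have h1 : ∀ ℓ : Fin m, siteOp W m ℓ
          = Vm * Matrix.diagonal (fun z : Fin m → Fin d => ((w (z ℓ) : ℂ))) * Vmᴴ := by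
        intro ℓ
        conv_lhs => rw [hspec]
        rw [hVmdef]
        exact siteOp_conj V hV1 _ m ℓ
      rw [Finset.sum_congr rfl fun ℓ _ => h1 ℓ]
      rw [← Finset.sum_mul, ← Matrix.mul_sum]
      have hdsum : ∑ ℓ : Fin m, Matrix.diagonal (fun z : Fin m → Fin d => ((w (z ℓ)) : ℂ))
          = Matrix.diagonal (fun x => ((a x : ℝ) : ℂ)) := by
        ext x y
        by_cases h : x = y
        · subst h
          simp only [Finset.sum_apply, Matrix.sum_apply, Matrix.diagonal_apply_eq, hadef]
          push_cast
          rfl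
        · simp [Matrix.sum_apply, Matrix.diagonal_apply_ne _ h]
      rw [hdsum]
    -- conjugated unitary
    set Pc : (Fin m → Fin d) → ℂ := fun x => ((P x : ℝ) : ℂ) with hPcdef
    set ac : (Fin m → Fin d) → ℂ := fun x => ((a x : ℝ) : ℂ) with hacdef
    set B : Matrix (Fin m → Fin d) (Fin m → Fin d) ℂ := Vmᴴ * U * Vm with hBdef
    have hU1 : U * Uᴴ = 1 := by
      have := Matrix.mem_unitaryGroup_iff.mp hU
      rwa [Matrix.star_eq_conjTranspose] at this
    have hU2 : Uᴴ * U = 1 := by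
      have := Matrix.mem_unitaryGroup_iff'.mp hU
      rwa [Matrix.star_eq_conjTranspose] at this
    have hBH : Bᴴ = Vmᴴ * Uᴴ * Vm := by
      rw [hBdef]
      simp [Matrix.conjTranspose_mul, Matrix.mul_assoc]
    have hB1 : B * Bᴴ = 1 := by
      rw [hBdef, hBH]
      calc Vmᴴ * U * Vm * (Vmᴴ * Uᴴ * Vm)
          = Vmᴴ * (U * ((Vm * Vmᴴ) * (Uᴴ * Vm))) := by simp only [Matrix.mul_assoc]
        _ = Vmᴴ * (U * (Uᴴ * Vm)) := by rw [hVm1, Matrix.one_mul]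
        _ = Vmᴴ * Vm := by rw [← Matrix.mul_assoc U, hU1, Matrix.one_mul]
        _ = 1 := hVm2
    have hB2 : Bᴴ * B = 1 := by
      rw [hBdef, hBH]
      calc Vmᴴ * Uᴴ * Vm * (Vmᴴ * U * Vm)
          = Vmᴴ * (Uᴴ * ((Vm * Vmᴴ) * (U * Vm))) := by simp only [Matrix.mul_assoc]
        _ = Vmᴴ * (Uᴴ * (U * Vm)) := by rw [hVm1, Matrix.one_mul]
        _ = Vmᴴ * Vm := by rw [← Matrix.mul_assoc Uᴴ, hU2, Matrix.one_mul]
        _ = 1 := hVm2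
    have cancel1 : ∀ X : Matrix (Fin m → Fin d) (Fin m → Fin d) ℂ, Vm * (Vmᴴ * X) = X :=
      fun X => by rw [← Matrix.mul_assoc, hVm1, Matrix.one_mul]
    have cancel2 : ∀ X : Matrix (Fin m → Fin d) (Fin m → Fin d) ℂ, Vmᴴ * (Vm * X) = X :=
      fun X => by rw [← Matrix.mul_assoc, hVm2, Matrix.one_mul]
    -- trace values
    have hLHSval : Matrix.trace (tensorPow γ m * ∑ ℓ : Fin m, siteOp W m ℓ)
        = ((∑ x, P x * a x : ℝ) : ℂ) := by
      rw [hΓ, hS]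
      have h3 : Vm * Matrix.diagonal Pc * Vmᴴ * (Vm * Matrix.diagonal ac * Vmᴴ)
          = Vm * (Matrix.diagonal Pc * (Matrix.diagonal ac * Vmᴴ)) := by
        simp only [Matrix.mul_assoc]
        rw [cancel2]
      rw [h3, Matrix.trace_mul_comm]
      simp only [Matrix.mul_assoc]
      rw [hVm2, Matrix.mul_one, Matrix.diagonal_mul_diagonal, Matrix.trace_diagonal]
      push_cast
      rfl
    have hRHSval : Matrix.trace (U * tensorPow γ m * Uᴴ * ∑ ℓ : Fin m, siteOp W m ℓ)
        = ((∑ y, ∑ x, Complex.normSq (B y x) * P x * a y : ℝ) : ℂ) := by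
      rw [hΓ, hS]
      have hId : U * (Vm * Matrix.diagonal Pc * Vmᴴ) * Uᴴ * (Vm * Matrix.diagonal ac * Vmᴴ)
          = Vm * (B * Matrix.diagonal Pc * Bᴴ * Matrix.diagonal ac) * Vmᴴ := by
        rw [hBH, hBdef]
        simp only [Matrix.mul_assoc]
        rw [cancel1]
      rw [hId, Matrix.trace_mul_cycle, ← Matrix.mul_assoc, hVm2, Matrix.one_mul,
        hPcdef, hacdef, trace_form]
    rw [hLHSval, hRHSval, Complex.ofReal_re, Complex.ofReal_re]
    -- the rearrangement inequality
    have hPa : ∀ x, P x = Real.exp (-β * a x) * (Z ^ m)⁻¹ := by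
      intro x
      rw [hPdef]
      simp only [hpdef]
      rw [Finset.prod_div_distrib, Finset.prod_const, Finset.card_univ, Fintype.card_fin,
        ← Real.exp_sum, div_eq_mul_inv]
      congr 2
      simp only [hadef]
      rw [Finset.mul_sum]
    have base := rearrange_ineq β hβ a (fun y x => Complex.normSq (B y x))
      (fun y x => Complex.normSq_nonneg _) (row_sums hB1) (col_sums hB2)
    have hZm : (0:ℝ) < Z ^ m := pow_pos hZ m
    calc ∑ x, P x * a x
        = (Z ^ m)⁻¹ * ∑ x, Real.exp (-β * a x) * a x := by
          rw [Finset.mul_sum]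
          exact Finset.sum_congr rfl fun x _ => by rw [hPa x]; ring
      _ ≤ (Z ^ m)⁻¹ * ∑ y, ∑ x, Complex.normSq (B y x) * Real.exp (-β * a x) * a y :=
          mul_le_mul_of_nonneg_left base (inv_nonneg.mpr hZm.le)
      _ = ∑ y, ∑ x, Complex.normSq (B y x) * P x * a y := by
          rw [Finset.mul_sum]
          refine Finset.sum_congr rfl fun y _ => ?_
          rw [Finset.mul_sum]
          exact Finset.sum_congr rfl fun x _ => by rw [hPa x]; ring
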